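/- Let A_0 > 0 satisfy A_0^{p-1-q} ≥ 2. Then for every ε ∈ (0, A_0/√3) with A_0 < ε^{-1/2}, and for every r ∈ (0,1], one has ((N-1)/r)(ε² + A_0²)^{(p-2)/2} A_0 - (ε² + A_0²)^{q/2} + ε^q ≥ (1/2)(ε² + A_0²)^{(p-1)/2} - (ε² + A_0²)^{q/2} ≥ 0. In particular, ψ(r) := A_0(1-r) is a supersolution of the regularized radial equation. -/

import Mathlib

open Real Set

/-- The linear barrier computation: if `A₀^{p-1-q} ≥ 2`, then for every
`ε ∈ (0, A₀/√3)` with `A₀ < ε^{-1/2}` and every `r ∈ (0,1]`,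
`((N-1)/r)(ε²+A₀²)^{(p-2)/2} A₀ - (ε²+A₀²)^{q/2} + ε^q
  ≥ (1/2)(ε²+A₀²)^{(p-1)/2} - (ε²+A₀²)^{q/2} ≥ 0`,
so `ψ(r) = A₀(1-r)` is a supersolution of the regularized radial equation. -/
theorem barrier_supersolution_inequality (N : ℕ) (p q : ℝ) (hN : 2 ≤ N)
    (hp : 2 ≤ p) (hq0 : 0 < q) (hq : q < p - 1)
    (A₀ : ℝ) (hA₀ : 0 < A₀) (hA₀2 : 2 ≤ A₀ ^ (p - 1 - q))
    (ε : ℝ) (hε : ε ∈ Ioo (0 : ℝ) (A₀ / Real.sqrt 3)) (hεA : A₀ < ε ^ (-(1/2) : ℝ))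
    (r : ℝ) (hr : r ∈ Ioc (0 : ℝ) 1) :
    (((N : ℝ) - 1) / r) * (ε ^ 2 + A₀ ^ 2) ^ ((p - 2) / 2) * A₀
        - (ε ^ 2 + A₀ ^ 2) ^ (q / 2) + ε ^ q
      ≥ (1 / 2) * (ε ^ 2 + A₀ ^ 2) ^ ((p - 1) / 2) - (ε ^ 2 + A₀ ^ 2) ^ (q / 2) ∧
    (1 / 2) * (ε ^ 2 + A₀ ^ 2) ^ ((p - 1) / 2) - (ε ^ 2 + A₀ ^ 2) ^ (q / 2) ≥ 0 := by
  obtain ⟨hε0, hεlt⟩ := hε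
  obtain ⟨hr0, hr1⟩ := hr
  set S : ℝ := ε ^ 2 + A₀ ^ 2 with hSdef
  have hS : 0 < S := by positivity
  -- second inequality
  have hA2S : A₀ ^ 2 ≤ S := by nlinarith [sq_nonneg ε]
  have hA₀rpow : A₀ ^ (p - 1 - q) = (A₀ ^ 2) ^ ((p - 1 - q) / 2) := by
    rw [← Real.rpow_natCast A₀ 2, ← Real.rpow_mul hA₀.le]
    congr 1; ring
  have h2S : 2 ≤ S ^ ((p - 1 - q) / 2) := by
    calc (2 : ℝ) ≤ A₀ ^ (p - 1 - q) := hA₀2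
    _ = (A₀ ^ 2) ^ ((p - 1 - q) / 2) := hA₀rpow
    _ ≤ S ^ ((p - 1 - q) / 2) :=
        Real.rpow_le_rpow (by positivity) hA2S (by linarith)
  have hsplit : S ^ ((p - 1) / 2) = S ^ (q / 2) * S ^ ((p - 1 - q) / 2) := by
    rw [← Real.rpow_add hS]; ring_nf
  have hSq : 0 < S ^ (q / 2) := Real.rpow_pos_of_pos hS _
  have part2 : (1 / 2) * S ^ ((p - 1) / 2) - S ^ (q / 2) ≥ 0 := by
    rw [hsplit]; nlinarith
  refine ⟨?_, part2⟩
  -- first inequality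
  have hεq : 0 < ε ^ q := Real.rpow_pos_of_pos hε0 _
  have hNr : 1 ≤ ((N : ℝ) - 1) / r := by
    rw [le_div_iff₀ hr0]
    have : (2 : ℝ) ≤ (N : ℝ) := by exact_mod_cast hN
    linarith
  have hε2 : ε ^ 2 < A₀ ^ 2 / 3 := by
    have h3 : Real.sqrt 3 > 0 := by positivity
    have hεA3 : ε * Real.sqrt 3 < A₀ := (lt_div_iff₀ h3).mp hεlt
    have hsq3 : Real.sqrt 3 ^ 2 = 3 := Real.sq_sqrt (by norm_num)
    have := mul_self_lt_mul_self (by positivity : (0:ℝ) ≤ ε * Real.sqrt 3) hεA3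
    nlinarith [hsq3]
  have hShalf : S ^ ((1 : ℝ) / 2) ≤ 2 * A₀ := by
    rw [← Real.sqrt_eq_rpow]
    have : S ≤ (2 * A₀) ^ 2 := by nlinarith
    calc Real.sqrt S ≤ Real.sqrt ((2 * A₀) ^ 2) := Real.sqrt_le_sqrt this
    _ = 2 * A₀ := Real.sqrt_sq (by positivity)
  have hsplit2 : S ^ ((p - 1) / 2) = S ^ ((p - 2) / 2) * S ^ ((1 : ℝ) / 2) := by
    rw [← Real.rpow_add hS]; ring_nf
  have hSp2 : 0 < S ^ ((p - 2) / 2) := Real.rpow_pos_of_pos hS _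
  have hkey : (1 / 2) * S ^ ((p - 1) / 2) ≤ ((N : ℝ) - 1) / r * S ^ ((p - 2) / 2) * A₀ := by
    rw [hsplit2]
    have h1 : S ^ ((p - 2) / 2) * S ^ ((1 : ℝ) / 2) ≤ S ^ ((p - 2) / 2) * (2 * A₀) :=
      mul_le_mul_of_nonneg_left hShalf hSp2.le
    nlinarith [mul_le_mul_of_nonneg_right hNr (mul_pos hSp2 hA₀).le]
  linarith
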